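/- arXiv:2305.01739 — 2 statements merged into one kernel-verified Lean document; each statement's English description precedes it below -/
import Mathlib

section
/- Let Θ(x) = (θ ⊙ x) a^μ x^{L(μ)} and Φ(x) = (φ ⊙ x) a^ν x^{L(ν)} be vector fields on Fⁿ, where θ, φ ∈ Fⁿ are constant vectors, ⊙ is the Hadamard (componentwise) product, x^m = x₁^{m₁}⋯xₙ^{mₙ}, and a^μ, a^ν are scalar parameters. Then the Lie bracket [Θ, Φ] = (DΦ)Θ − (DΘ)Φ equals (α ⊙ x) a^{μ+ν} x^{L(μ+ν)} where α = ⟨L(ν), θ⟩ φ − ⟨L(μ), φ⟩ θ and ⟨·,·⟩ is the standard inner product. -/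
open scoped BigOperators

lemma aux_prod_zpow {F : Type*} [RCLike F] {n : ℕ} (k : Fin n → ℤ)
    (x : Fin n → F) (hx : ∀ i, x i ≠ 0) :
    HasFDerivAt (fun y : Fin n → F => ∏ j, y j ^ k j)
      (∑ j, (∏ l ∈ Finset.univ.erase j, x l ^ k l) •
        (((k j : F) * x j ^ (k j - 1)) •
          (ContinuousLinearMap.proj j : (Fin n → F) →L[F] F))) x :=
  HasFDerivAt.finset_prod (fun j _ =>
    (hasDerivAt_zpow (k j) (x j) (Or.inl (hx j))).comp_hasFDerivAt x
      (hasFDerivAt_apply j x))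

lemma aux_comp {F : Type*} [RCLike F] {n : ℕ} (c : Fin n → F) (k : Fin n → ℤ) (C : F)
    (x : Fin n → F) (hx : ∀ i, x i ≠ 0) (i : Fin n) :
    HasFDerivAt (fun y : Fin n → F => c i * y i * C * ∏ j, y j ^ k j)
      ((c i * x i * C) • (∑ j, (∏ l ∈ Finset.univ.erase j, x l ^ k l) •
          (((k j : F) * x j ^ (k j - 1)) •
            (ContinuousLinearMap.proj j : (Fin n → F) →L[F] F)))
        + (∏ j, x j ^ k j) • ((c i * C) •
            (ContinuousLinearMap.proj i : (Fin n → F) →L[F] F))) x := by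
  have h1 : HasFDerivAt (fun y : Fin n → F => c i * y i * C)
      ((c i * C) • (ContinuousLinearMap.proj i : (Fin n → F) →L[F] F)) x := by
    have : HasFDerivAt (fun y : Fin n → F => c i * y i * C)
        (C • c i • (ContinuousLinearMap.proj i : (Fin n → F) →L[F] F)) x :=
      ((hasFDerivAt_apply (𝕜 := F) i x).const_mul (c i)).mul_const C
    convert this using 1
    ext v
    simp [mul_comm, mul_assoc, mul_left_comm]
  exact h1.mul (aux_prod_zpow k x hx)

/-- Lie bracket of two monomial vector fields `Θ(x) = (θ ⊙ x) a^μ x^{L(μ)}` and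
`Φ(x) = (φ ⊙ x) a^ν x^{L(ν)}`: on the set where all `xᵢ ≠ 0`,
`[Θ,Φ] = (DΦ)Θ − (DΘ)Φ = (α ⊙ x) a^{μ+ν} x^{L(μ)+L(ν)}` with
`α = ⟨L(ν),θ⟩ φ − ⟨L(μ),φ⟩ θ`. Here `A = a^μ`, `B = a^ν` are fixed scalars. -/
theorem stmt_4 {F : Type*} [RCLike F] {n : ℕ}
    (θ φ : Fin n → F) (Lμ Lν : Fin n → ℤ) (A B : F)
    (Θ Φ : (Fin n → F) → (Fin n → F))
    (hΘ : Θ = fun x i => θ i * x i * A * ∏ j, x j ^ Lμ j)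
    (hΦ : Φ = fun x i => φ i * x i * B * ∏ j, x j ^ Lν j)
    (x : Fin n → F) (hx : ∀ i, x i ≠ 0) :
    fderiv F Φ x (Θ x) - fderiv F Θ x (Φ x)
      = fun i => ((∑ j, (Lν j : F) * θ j) * φ i - (∑ j, (Lμ j : F) * φ j) * θ i)
          * x i * (A * B) * ∏ j, x j ^ (Lμ j + Lν j) := by
  subst hΘ hΦ
  have hΘd := hasFDerivAt_pi.2 (fun i => aux_comp θ Lμ A x hx i)
  have hΦd := hasFDerivAt_pi.2 (fun i => aux_comp φ Lν B x hx i)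
  rw [hΘd.fderiv, hΦd.fderiv]
  set P := ∏ j, x j ^ Lμ j with hP
  set Q := ∏ j, x j ^ Lν j with hQ
  funext i
  have key : ∀ (k : Fin n → ℤ) (w : Fin n → F) (C : F) (R : F),
      (∑ j, (∏ l ∈ Finset.univ.erase j, x l ^ k l) *
        ((k j : F) * x j ^ (k j - 1) * (w j * x j * C * R)))
        = (∑ j, (k j : F) * w j) * C * R * ∏ j, x j ^ k j := by
    intro k w C R
    rw [Finset.sum_mul, Finset.sum_mul, Finset.sum_mul]
    refine Finset.sum_congr rfl (fun j _ => ?_)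
    have h1 : x j ^ (k j - 1) * x j = x j ^ k j := by
      rw [← zpow_add_one₀ (hx j)]; ring_nf
    have h2 : (∏ l ∈ Finset.univ.erase j, x l ^ k l) * x j ^ k j = ∏ l, x l ^ k l :=
      Finset.prod_erase_mul _ _ (Finset.mem_univ j)
    calc (∏ l ∈ Finset.univ.erase j, x l ^ k l) *
          ((k j : F) * x j ^ (k j - 1) * (w j * x j * C * R))
        = ((∏ l ∈ Finset.univ.erase j, x l ^ k l) * (x j ^ (k j - 1) * x j)) *
            ((k j : F) * w j * C * R) := by ring
      _ = (k j : F) * w j * C * R * ∏ l, x l ^ k l := by rw [h1, h2]; ring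
  have hPQ : (∏ j, x j ^ (Lμ j + Lν j)) = P * Q := by
    rw [hP, hQ, ← Finset.prod_mul_distrib]
    exact Finset.prod_congr rfl (fun j _ => zpow_add₀ (hx j) _ _)
  simp only [Pi.sub_apply, ContinuousLinearMap.pi_apply, ContinuousLinearMap.add_apply,
    ContinuousLinearMap.smul_apply, ContinuousLinearMap.coe_sum', Finset.sum_apply,
    ContinuousLinearMap.proj_apply, smul_eq_mul]
  rw [hPQ]
  rw [key Lν θ A P, key Lμ φ B Q]
  ring
end

section
/- Define on the set A of formal sums Σ_ν α_ν a^ν (with α_ν ∈ Fⁿ, ν ∈ ℕ₀^ℓ) the bracket of monomials [θ a^μ, φ a^ν] = (⟨L(ν), θ⟩ φ − ⟨L(μ), φ⟩ θ) a^{μ+ν}, extended bilinearly, where L : ℕ₀^ℓ → ℤ^n is additive. Then this bracket is antisymmetric and satisfies the Jacobi identity, making A a Lie algebra over F. -/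
/-- The bracket on the space `A` of formal sums `Σ_ν α_ν a^ν` (modeled as finitely
supported families of coefficient vectors), defined on monomials by
`[θ a^μ, φ a^ν] = (⟨L(ν),θ⟩ φ − ⟨L(μ),φ⟩ θ) a^{μ+ν}` and extended bilinearly,
is antisymmetric and satisfies the Jacobi identity. -/
theorem stmt_8 {F : Type*} [RCLike F] {ℓ n : ℕ} (Lt : Fin ℓ → Fin n → ℤ)
    (L : (Fin ℓ →₀ ℕ) → (Fin n → ℤ))
    (hL : ∀ μ j, L μ j = ∑ i, (μ i : ℤ) * Lt i j)
    (B : ((Fin ℓ →₀ ℕ) →₀ (Fin n → F)) →ₗ[F]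
          ((Fin ℓ →₀ ℕ) →₀ (Fin n → F)) →ₗ[F] ((Fin ℓ →₀ ℕ) →₀ (Fin n → F)))
    (hB : ∀ (μ ν : Fin ℓ →₀ ℕ) (θ φ : Fin n → F),
      B (Finsupp.single μ θ) (Finsupp.single ν φ)
        = Finsupp.single (μ + ν)
            ((∑ j, (L ν j : F) * θ j) • φ - (∑ j, (L μ j : F) * φ j) • θ)) :
    (∀ x y, B x y = - B y x) ∧
      (∀ x y z, B x (B y z) + B y (B z x) + B z (B x y) = 0) := by
  set S : (Fin ℓ →₀ ℕ) → (Fin n → F) → F := fun μ θ => ∑ j, (L μ j : F) * θ j with hS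
  have hSadd : ∀ μ ν θ, S (μ + ν) θ = S μ θ + S ν θ := by
    intro μ ν θ
    simp only [hS]
    rw [← Finset.sum_add_distrib]
    refine Finset.sum_congr rfl fun j _ => ?_
    rw [hL (μ + ν) j, hL μ j, hL ν j]
    push_cast [Finsupp.add_apply]
    simp [add_mul, Finset.sum_add_distrib]
  have hSlin : ∀ μ (a b : F) (φ ψ : Fin n → F),
      S μ (a • φ - b • ψ) = a * S μ φ - b * S μ ψ := by
    intro μ a b φ ψ
    simp only [hS, Pi.sub_apply, Pi.smul_apply, smul_eq_mul, mul_sub,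
      Finset.mul_sum, ← Finset.sum_sub_distrib]
    refine Finset.sum_congr rfl fun j _ => ?_
    ring
  have hB' : ∀ (μ ν : Fin ℓ →₀ ℕ) (θ φ : Fin n → F),
      B (Finsupp.single μ θ) (Finsupp.single ν φ)
        = Finsupp.single (μ + ν) (S ν θ • φ - S μ φ • θ) := hB
  constructor
  · intro x y
    induction x using Finsupp.induction_linear with
    | zero => simp
    | add x1 x2 h1 h2 => simp [map_add, h1, h2]; abel
    | single μ θ =>
      induction y using Finsupp.induction_linear with
      | zero => simp
      | add y1 y2 h1 h2 => simp [map_add, h1, h2]; abel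
      | single ν φ =>
        rw [hB', hB', add_comm ν μ, ← Finsupp.single_neg]
        congr 1
        abel
  · intro x y z
    induction x using Finsupp.induction_linear with
    | zero => simp
    | add x1 x2 h1 h2 =>
      have h := congrArg₂ (· + ·) h1 h2
      simp only [add_zero] at h
      simp only [map_add, LinearMap.add_apply]
      rw [← h]; abel
    | single μ θ =>
      induction y using Finsupp.induction_linear with
      | zero => simp
      | add y1 y2 h1 h2 =>
        have h := congrArg₂ (· + ·) h1 h2
        simp only [add_zero] at h
        simp only [map_add, LinearMap.add_apply]
        rw [← h]; abel
      | single ν φ =>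
        induction z using Finsupp.induction_linear with
        | zero => simp
        | add z1 z2 h1 h2 =>
          have h := congrArg₂ (· + ·) h1 h2
          simp only [add_zero] at h
          simp only [map_add, LinearMap.add_apply]
          rw [← h]; abel
        | single κ ψ =>
          rw [hB' ν κ, hB' κ μ, hB' μ ν, hB' μ, hB' ν, hB' κ]
          simp only [hSadd, hSlin]
          rw [show ν + (κ + μ) = μ + (ν + κ) by ext i; simp; omega,
              show κ + (μ + ν) = μ + (ν + κ) by ext i; simp; omega,
              ← Finsupp.single_add, ← Finsupp.single_add]
          rw [show ((S ν θ + S κ θ) • (S κ φ • ψ - S ν ψ • φ) -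
                (S κ φ * S μ ψ - S ν ψ * S μ φ) • θ +
              ((S κ φ + S μ φ) • (S μ ψ • θ - S κ θ • ψ) -
                (S μ ψ * S ν θ - S κ θ * S ν ψ) • φ) +
              ((S μ ψ + S ν ψ) • (S ν θ • φ - S μ φ • θ) -
                (S ν θ * S κ φ - S μ φ * S κ θ) • ψ) : Fin n → F) = 0 from by
            funext j
            simp only [Pi.add_apply, Pi.sub_apply, Pi.smul_apply, smul_eq_mul,
              Pi.zero_apply]
            ring]
          exact Finsupp.single_zero _
end
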